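/- Let A, B ⊆ R^d be closed convex cones and let T_DR = (1/2)(Id + R_B ∘ R_A) where R_C = 2P_C − Id is the reflection across C. If x = u + v with u ∈ (−B) ∩ A° and v ∈ B° ∩ A, then T_DR(x) = 0. -/

import Mathlib

lemma proj_eq_of_char {E : Type*} [NormedAddCommGroup E] [InnerProductSpace ℝ E]
    {C : Set E} (P : E → E)
    (hP : ∀ x, P x ∈ C ∧ ∀ w ∈ C, ‖x - P x‖ ≤ ‖x - w‖)
    (x p : E) (hp : p ∈ C)
    (hchar : ∀ w ∈ C, inner ℝ (x - p) (w - p) ≤ (0 : ℝ)) : P x = p := by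
  have h1 : ‖x - P x‖ ≤ ‖x - p‖ := (hP x).2 p hp
  have h2 : inner ℝ (x - p) (P x - p) ≤ (0 : ℝ) := hchar (P x) (hP x).1
  have hexp : ‖x - P x‖ ^ 2 =
      ‖x - p‖ ^ 2 - 2 * inner ℝ (x - p) (P x - p) + ‖P x - p‖ ^ 2 := by
    have : x - P x = (x - p) - (P x - p) := by abel
    rw [this, @norm_sub_sq_real]
  have hsq : ‖x - P x‖ ^ 2 ≤ ‖x - p‖ ^ 2 := by
    have := pow_le_pow_left₀ (norm_nonneg _) h1 2
    simpa using this
  have : ‖P x - p‖ ^ 2 ≤ 0 := by nlinarith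
  have hz : ‖P x - p‖ = 0 := by nlinarith [sq_nonneg ‖P x - p‖, norm_nonneg (P x - p)]
  exact sub_eq_zero.mp (norm_eq_zero.mp hz)

theorem stmt1 {d : ℕ} (A B : Set (EuclideanSpace ℝ (Fin d)))
    (hAclosed : IsClosed A) (hAconv : Convex ℝ A)
    (hBclosed : IsClosed B) (hBconv : Convex ℝ B)
    (hAcone : ∀ x ∈ A, ∀ t : ℝ, 0 < t → t • x ∈ A)
    (hBcone : ∀ x ∈ B, ∀ t : ℝ, 0 < t → t • x ∈ B)
    (PA PB T : EuclideanSpace ℝ (Fin d) → EuclideanSpace ℝ (Fin d))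
    (hPA : ∀ x, PA x ∈ A ∧ ∀ w ∈ A, ‖x - PA x‖ ≤ ‖x - w‖)
    (hPB : ∀ x, PB x ∈ B ∧ ∀ w ∈ B, ‖x - PB x‖ ≤ ‖x - w‖)
    (hT : ∀ x, T x = (1 / 2 : ℝ) •
      (x + ((2 : ℝ) • PB ((2 : ℝ) • PA x - x) - ((2 : ℝ) • PA x - x))))
    (u v x : EuclideanSpace ℝ (Fin d))
    (hu : u ∈ (-B) ∩ {y | ∀ w ∈ A, inner ℝ w y ≤ (0 : ℝ)})
    (hv : v ∈ {y | ∀ w ∈ B, inner ℝ w y ≤ (0 : ℝ)} ∩ A)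
    (hx : x = u + v) :
    T x = 0 := by
  obtain ⟨hunB, huA⟩ := hu
  obtain ⟨hvB, hvA⟩ := hv
  have hnu : -u ∈ B := by simpa using hunB
  have huv : inner ℝ u v = (0 : ℝ) := by
    have h1 : inner ℝ (-u) v ≤ (0 : ℝ) := hvB (-u) hnu
    have h2 : inner ℝ v u ≤ (0 : ℝ) := huA v hvA
    rw [inner_neg_left] at h1
    rw [real_inner_comm] at h2
    linarith
  have hPAx : PA x = v := by
    apply proj_eq_of_char PA hPA x v hvA
    intro w hw
    have hxv : x - v = u := by rw [hx]; abel
    rw [hxv, inner_sub_right, huv, sub_zero, real_inner_comm]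
    exact huA w hw
  have hPBy : PB ((2 : ℝ) • PA x - x) = -u := by
    apply proj_eq_of_char PB hPB _ (-u) hnu
    intro w hw
    have : (2 : ℝ) • PA x - x - (-u) = v := by
      rw [hPAx, hx, two_smul]; abel
    rw [this, inner_sub_right, inner_neg_right]
    have e1 : inner ℝ v u = (0 : ℝ) := by rw [real_inner_comm]; exact huv
    have e2 : inner ℝ v w ≤ (0 : ℝ) := by rw [real_inner_comm]; exact hvB w hw
    linarith
  rw [hT, hPBy, hPAx, hx]
  module
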